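/- Let 𝔤 be a Lie algebra over a field of characteristic zero, let z ∈ 𝔤, let (ℓ_n)_{n∈ℤ} be a family of elements of 𝔤 and (r_{n,m})_{n,m∈ℤ} a family of scalars such that ⁅z, ℓ_n⁆ = 0 for all n ∈ ℤ and ⁅ℓ_n, ℓ_m⁆ = (n−m)·ℓ_{n+m} + r_{n,m}·z for all n, m ∈ ℤ. Define L_n := ℓ_n + (r_{n,0}/n)·z for n ≠ 0, L_0 := ℓ_0 + (r_{1,−1}/2)·z, and Z := (2·r_{2,−2} − 4·r_{1,−1})·z. Then ⁅Z, L_n⁆ = 0 for all n ∈ ℤ, and ⁅L_n, L_m⁆ = (n−m)·L_{n+m} + (1/12)·(n³−n)·δ_{n+m,0}·Z for all n, m ∈ ℤ. -/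

import Mathlib

section Helpers
variable {K : Type*} [Field K] [CharZero K] {g : Type*} [LieRing g] [LieAlgebra K g]
    (z : g) (ℓ : ℤ → g) (r : ℤ → ℤ → K)
    (hz : ∀ n : ℤ, ⁅z, ℓ n⁆ = 0)
    (hℓ : ∀ n m : ℤ, ⁅ℓ n, ℓ m⁆ = ((n - m : ℤ) : K) • ℓ (n + m) + r n m • z)

include hz hℓ

omit [CharZero K] hz in
lemma vira_skew : ∀ n m : ℤ, r m n • z = -(r n m • z) := by
  intro n m
  have h := lie_skew (ℓ n) (ℓ m)
  rw [hℓ, hℓ, add_comm m n] at h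
  have e : ((m - n : ℤ) : K) = -((n - m : ℤ) : K) := by push_cast; ring
  rw [e] at h
  linear_combination (norm := module) -h

omit [CharZero K] in
lemma vira_coc : ∀ k n m : ℤ,
    ((n - m : ℤ) : K) • (r k (n + m) • z) + ((m - k : ℤ) : K) • (r n (m + k) • z)
      + ((k - n : ℤ) : K) • (r m (n + k) • z) = 0 := by
  intro k n m
  have hz' : ∀ a : ℤ, ⁅ℓ a, z⁆ = 0 := fun a => by rw [← lie_skew, hz, neg_zero]
  have h := leibniz_lie (ℓ k) (ℓ n) (ℓ m)
  simp only [hℓ, lie_add, add_lie, lie_smul, smul_lie, hz, hz', smul_zero, add_zero, zero_add,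
    smul_add] at h
  rw [show k + n + m = k + (n + m) by ring, show k + m = m + k by ring,
    show k + n = n + k by ring, show n + (m + k) = k + (n + m) by ring] at h
  have s1 : r m (n + k) • z + r (n + k) m • z = 0 := by
    linear_combination (norm := module) vira_skew z ℓ r hℓ (n + k) m
  linear_combination (norm := (match_scalars <;> (push_cast; ring))) h + ((k - n : ℤ) : K) • s1

omit [CharZero K] in
lemma vira_off : ∀ n m : ℤ,
    ((n + m : ℤ) : K) • (r n m • z) = ((n - m : ℤ) : K) • (r (n + m) 0 • z) := by
  intro n m
  have h := vira_coc z ℓ r hz hℓ 0 n m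
  rw [show m + 0 = m by ring, show n + 0 = n by ring] at h
  have s1 := vira_skew z ℓ r hℓ (n + m) 0
  have s2 := vira_skew z ℓ r hℓ n m
  linear_combination (norm := (match_scalars <;> (push_cast; ring)))
    h - ((n - m : ℤ) : K) • s1 + (n : K) • s2

lemma vira_diag : ∀ n : ℤ, r n (-n) • z =
    (((n ^ 3 - n : ℤ) : K) / 6 * (r 2 (-2) - 2 * r 1 (-1)) + (n : K) * r 1 (-1)) • z := by
  have h00 : r 0 0 • z = 0 := by
    have h := hℓ 0 0
    rw [lie_self] at h
    linear_combination (norm := module) -h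
  have key : ∀ n : ℤ, 2 ≤ n → r n (-n) • z =
      (((n ^ 3 - n : ℤ) : K) / 6 * (r 2 (-2) - 2 * r 1 (-1)) + (n : K) * r 1 (-1)) • z := by
    intro n hn
    refine Int.le_induction (motive := fun n _ => r n (-n) • z =
        (((n ^ 3 - n : ℤ) : K) / 6 * (r 2 (-2) - 2 * r 1 (-1)) + (n : K) * r 1 (-1)) • z)
        ?_ ?_ n hn
    · -- base
      beta_reduce
      have e : (((2 : ℤ) ^ 3 - 2 : ℤ) : K) / 6 * (r 2 (-2) - 2 * r 1 (-1))
          + ((2 : ℤ) : K) * r 1 (-1) = r 2 (-2) := by push_cast; ring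
      rw [e]
    · intro n hn ih
      beta_reduce at ih ⊢
      have h := vira_coc z ℓ r hz hℓ 1 n (-n - 1)
      rw [show n + (-n - 1) = (-1 : ℤ) by ring, show (-n - 1) + 1 = -n by ring,
        show (-n - 1 : ℤ) = -(n + 1) by ring] at h
      have s1 := vira_skew z ℓ r hℓ (n + 1) (-(n + 1))
      have hne : ((n - 1 : ℤ) : K) ≠ 0 := by
        rw [Int.cast_ne_zero]; omega
      apply smul_right_injective g hne
      linear_combination (norm := (match_scalars <;> (push_cast; ring)))
        h + ((n - 1 : ℤ) : K) • s1 + ((n + 2 : ℤ) : K) • ih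
  have hpos : ∀ n : ℤ, 0 ≤ n → r n (-n) • z =
      (((n ^ 3 - n : ℤ) : K) / 6 * (r 2 (-2) - 2 * r 1 (-1)) + (n : K) * r 1 (-1)) • z := by
    intro n hn
    by_cases h0 : n = 0
    · subst h0; simpa using h00
    · by_cases h1 : n = 1
      · subst h1; norm_num
      · exact key n (by omega)
  intro n
  rcases le_or_gt 0 n with hn | hn
  · exact hpos n hn
  · have hp := hpos (-n) (by omega)
    rw [neg_neg] at hp
    have s := vira_skew z ℓ r hℓ (-n) n
    linear_combination (norm := (match_scalars <;> (push_cast; ring))) s - hp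

end Helpers

/-- Any central extension of the Witt (De Witt) relations can be renormalized
into the Virasoro relations. -/
theorem virasoro_renormalization
    {K : Type*} [Field K] [CharZero K] {g : Type*} [LieRing g] [LieAlgebra K g]
    (z : g) (ℓ : ℤ → g) (r : ℤ → ℤ → K)
    (hz : ∀ n : ℤ, ⁅z, ℓ n⁆ = 0)
    (hℓ : ∀ n m : ℤ, ⁅ℓ n, ℓ m⁆ = ((n - m : ℤ) : K) • ℓ (n + m) + r n m • z)
    (L : ℤ → g)
    (hL0 : L 0 = ℓ 0 + (r 1 (-1) / 2) • z)
    (hLn : ∀ n : ℤ, n ≠ 0 → L n = ℓ n + (r n 0 / (n : K)) • z)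
    (Z : g) (hZ : Z = (2 * r 2 (-2) - 4 * r 1 (-1)) • z) :
    (∀ n : ℤ, ⁅Z, L n⁆ = 0) ∧
      ∀ n m : ℤ, ⁅L n, L m⁆ = ((n - m : ℤ) : K) • L (n + m) +
        ((1 / 12 : K) * ((n ^ 3 - n : ℤ) : K) * (if n + m = 0 then 1 else 0)) • Z := by
  have hz' : ∀ a : ℤ, ⁅ℓ a, z⁆ = 0 := fun a => by rw [← lie_skew, hz, neg_zero]
  have hzz : ⁅z, z⁆ = 0 := lie_self z
  have hLrep : ∀ n : ℤ, ∃ c : K, L n = ℓ n + c • z := by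
    intro n
    by_cases h : n = 0
    · exact ⟨r 1 (-1) / 2, h ▸ hL0⟩
    · exact ⟨r n 0 / (n : K), hLn n h⟩
  have hbrL : ∀ n m : ℤ, ⁅L n, L m⁆ = ((n - m : ℤ) : K) • ℓ (n + m) + r n m • z := by
    intro n m
    obtain ⟨a, ha⟩ := hLrep n
    obtain ⟨b, hb⟩ := hLrep m
    rw [ha, hb]
    simp only [lie_add, add_lie, lie_smul, smul_lie, hz, hz', hzz, smul_zero, add_zero, zero_add,
      hℓ]
  constructor
  · intro n
    obtain ⟨c, hc⟩ := hLrep n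
    rw [hZ, hc]
    simp only [smul_lie, lie_add, lie_smul, hz, hzz, smul_zero, add_zero]
  · intro n m
    rw [hbrL]
    by_cases hs : n + m = 0
    · have hm : m = -n := by omega
      subst hm
      rw [if_pos hs, show n + -n = (0 : ℤ) by ring, hL0, hZ]
      have hd := vira_diag z ℓ r hz hℓ n
      linear_combination (norm := (match_scalars <;> (push_cast; ring))) hd
    · rw [if_neg hs, hLn (n + m) hs, hZ]
      have hne : ((n + m : ℤ) : K) ≠ 0 := by
        rw [Int.cast_ne_zero]; omega
      have ho := vira_off z ℓ r hz hℓ n m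
      have hcanc : ((n + m : ℤ) : K) • ((r (n + m) 0 / ((n + m : ℤ) : K)) • z)
          = r (n + m) 0 • z := by
        rw [smul_smul, mul_div_cancel₀ _ hne]
      apply smul_right_injective g hne
      linear_combination (norm := (match_scalars <;> (push_cast; ring)))
        ho - ((n - m : ℤ) : K) • hcanc
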